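/- Fix integers ν ≥ 1 and r ≥ 1. There is a constant c(ν, r) such that for all sufficiently large H, ∑_{D ⊆ [1,H], |D| = ν} 𝔖(D ∪ {0})^r ≤ c(ν, r)·H^ν, where the sum runs over all ν-element subsets D of {1, …, H} (with the convention 𝔖(S) = 0 for inadmissible S). -/

import Mathlib

open scoped Classical

/-- `nuP p H` is the number of distinct residue classes modulo `p`
occupied by the elements of the finite set `H` of integers. -/
def nuP (p : ℕ) (H : Finset ℤ) : ℕ :=
  (H.image (fun x : ℤ => (x : ZMod p))).card

/-- `H` is admissible if it misses a residue class modulo every prime. -/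
def Admissible (H : Finset ℤ) : Prop :=
  ∀ p : ℕ, p.Prime → nuP p H < p

/-- The singular series `𝔖(H) = ∏_p (1 - ν_p(H)/p)(1 - 1/p)^{-|H|}`,
defined to be `0` for inadmissible `H`. -/
noncomputable def singSeries (H : Finset ℤ) : ℝ :=
  if Admissible H then
    ∏' p : Nat.Primes, (1 - (nuP p H : ℝ) / (p : ℕ)) * ((1 - ((p : ℕ) : ℝ)⁻¹)⁻¹) ^ H.card
  else 0



lemma rinv_pos {x : ℝ} (h : 2 ≤ x) : 0 < 1 - x⁻¹ := by

  have hx : (0:ℝ) < x := by linarith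

  have h1 : x⁻¹ ≤ 1/2 := by

    rw [inv_eq_one_div]; exact one_div_le_one_div_of_le two_pos h

  linarith



lemma rinv_le_two {x : ℝ} (h : 2 ≤ x) : (1 - x⁻¹)⁻¹ ≤ 2 := by

  have h1 : x⁻¹ ≤ 1/2 := by

    rw [inv_eq_one_div]; exact one_div_le_one_div_of_le two_pos h

  rw [inv_le_comm₀ (rinv_pos h) two_pos]

  norm_num; linarith



lemma rinv_le {x : ℝ} (h : 2 ≤ x) : (1 - x⁻¹)⁻¹ ≤ 1 + 2/x := by

  have hx : (0:ℝ) < x := by linarith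

  have key : (1 - x⁻¹) * (1 + 2/x) = 1 + (x - 2)/x^2 := by field_simp; ring

  have key2 : (1:ℝ) ≤ (1 - x⁻¹) * (1 + 2/x) := by

    rw [key]

    have hx2 : (0:ℝ) ≤ x - 2 := by linarith

    have : (0:ℝ) ≤ (x-2)/x^2 := by positivity

    linarith

  calc (1 - x⁻¹)⁻¹ = (1 - x⁻¹)⁻¹ * 1 := by ring

    _ ≤ (1 - x⁻¹)⁻¹ * ((1 - x⁻¹) * (1 + 2/x)) := by

        apply mul_le_mul_of_nonneg_left key2 (inv_pos.2 (rinv_pos h)).le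

    _ = 1 + 2/x := by

        rw [← mul_assoc, inv_mul_cancel₀ (rinv_pos h).ne', one_mul]



lemma rbern {x : ℝ} (h : 2 ≤ x) (n : ℕ) : 1 - n/x ≤ (1 - x⁻¹)^n := by

  have hx : (0:ℝ) < x := by linarith

  have := one_add_mul_le_pow (a := -x⁻¹) (by

    have h0 : (0:ℝ) ≤ x⁻¹ := by positivity

    have h1 : x⁻¹ ≤ 1/2 := by

      rw [inv_eq_one_div]; exact one_div_le_one_div_of_le two_pos h

    linarith) n

  calc 1 - (n:ℝ)/x = 1 + n * (-x⁻¹) := by field_simp; ring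

  _ ≤ _ := by simpa [sub_eq_add_neg] using this


lemma pow_one_add_le (n p : ℕ) (hn : 1 ≤ n) (hp : 4*n ≤ p) :
    (1 + 2/(p:ℝ))^n ≤ 1 + 4*n/p := by
  have hx4 : (4:ℝ)*n ≤ p := by exact_mod_cast hp
  have hn1 : (1:ℝ) ≤ n := by exact_mod_cast hn
  have hx : (0:ℝ) < p := by nlinarith
  have hber : 1 + (n:ℝ) * (-(2/p)) ≤ (1 + (-(2/p)))^n := by
    apply one_add_mul_le_pow
    have : 2/(p:ℝ) ≤ 2 := by
      rw [div_le_iff₀ hx]; nlinarith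
    linarith
  have hQ : (1:ℝ) - 2*n/p ≤ (1 - 2/p)^n := by
    have := hber; rw [show (1 + -(2/(p:ℝ))) = 1 - 2/p by ring] at this
    calc (1:ℝ) - 2*n/p = 1 + n * (-(2/p)) := by ring
    _ ≤ _ := this
  have hQhalf : (1:ℝ)/2 ≤ 1 - 2*n/p := by
    have : 2*(n:ℝ)/p ≤ 1/2 := by rw [div_le_iff₀ hx]; nlinarith
    linarith
  have hPQ : (1 + 2/(p:ℝ))^n * (1 - 2/p)^n ≤ 1 := by
    rw [← mul_pow]
    apply pow_le_one₀
    · have h2p : 2/(p:ℝ) ≤ 1 := by rw [div_le_iff₀ hx]; nlinarith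
      have h2p0 : (0:ℝ) ≤ 2/(p:ℝ) := by positivity
      nlinarith
    · have h2p : 2/(p:ℝ) ≤ 1 := by rw [div_le_iff₀ hx]; nlinarith
      have h2p0 : (0:ℝ) ≤ 2/(p:ℝ) := by positivity
      nlinarith
  have hP : (0:ℝ) < (1 + 2/(p:ℝ))^n := by positivity
  have hQpos : (0:ℝ) < (1 - 2/(p:ℝ))^n := by nlinarith
  -- P ≤ 1/Q ≤ 1/(1-2n/x) ≤ 1+4n/x
  have h1 : (1 + 2/(p:ℝ))^n ≤ 1/((1:ℝ) - 2*n/p) := by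
    rw [le_div_iff₀ (by linarith)]
    calc (1 + 2/(p:ℝ))^n * (1 - 2*n/p) ≤ (1 + 2/(p:ℝ))^n * (1 - 2/p)^n := by
          apply mul_le_mul_of_nonneg_left hQ hP.le
    _ ≤ 1 := hPQ
  have h2 : 1/((1:ℝ) - 2*n/p) ≤ 1 + 4*n/p := by
    rw [div_le_iff₀ (by linarith)]
    have e1 : (0:ℝ) ≤ n/p := by positivity
    have e2 : (n:ℝ)/p ≤ 1/4 := by rw [div_le_iff₀ hx]; nlinarith
    have := mul_nonneg e1 (by linarith : (0:ℝ) ≤ 1 - 4*((n:ℝ)/p))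
    have hexp : (1 + 4*(n:ℝ)/p) * (1 - 2*(n:ℝ)/p) = 1 + 2*((n:ℝ)/p)*(1 - 4*((n:ℝ)/p)) := by ring
    rw [hexp]; linarith
  linarith

lemma nuP_le_card (p : ℕ) (S : Finset ℤ) : nuP p S ≤ S.card := Finset.card_image_le

lemma exists_pair_of_nuP_lt (p : ℕ) (S : Finset ℤ) (h : nuP p S < S.card) :
    ∃ x ∈ S, ∃ y ∈ S, x < y ∧ (p:ℤ) ∣ (y - x) := by
  obtain ⟨x, hx, y, hy, hne, heq⟩ :=
    Finset.exists_ne_map_eq_of_card_lt_of_maps_to (t := S.image (fun x : ℤ => (x : ZMod p)))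
      h (fun a ha => Finset.mem_image_of_mem _ ha)
  have hdvd : (p:ℤ) ∣ (y - x) := by
    rw [← ZMod.intCast_zmod_eq_zero_iff_dvd]
    push_cast
    rw [sub_eq_zero]
    exact heq.symm
  rcases lt_or_gt_of_ne hne with h1 | h1
  · exact ⟨x, hx, y, hy, h1, hdvd⟩
  · exact ⟨y, hy, x, hx, h1, by simpa using hdvd.neg_right⟩

lemma bad_prime_le (p : ℕ) (S : Finset ℤ) (H : ℕ) (hS : S ⊆ Finset.Icc 0 (H:ℤ))
    (h : nuP p S < S.card) : p ≤ H := by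
  obtain ⟨x, hx, y, hy, hlt, hdvd⟩ := exists_pair_of_nuP_lt p S h
  have h1 := Finset.mem_Icc.1 (hS hx)
  have h2 := Finset.mem_Icc.1 (hS hy)
  have : (p:ℤ) ≤ y - x := Int.le_of_dvd (by omega) hdvd
  omega

lemma one_le_prod_real {α : Type*} {s : Finset α} {f : α → ℝ} (h : ∀ i ∈ s, 1 ≤ f i) :
    1 ≤ ∏ i ∈ s, f i := by
  calc (1:ℝ) = ∏ _i ∈ s, 1 := by simp
  _ ≤ ∏ i ∈ s, f i := Finset.prod_le_prod (by simp) h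

lemma prod_le_prod_subset_real {α : Type*} {s t : Finset α} {f : α → ℝ} (hst : s ⊆ t)
    (h1 : ∀ i ∈ t, 1 ≤ f i) : ∏ i ∈ s, f i ≤ ∏ i ∈ t, f i := by
  rw [← Finset.prod_sdiff hst]
  have h1' : 1 ≤ ∏ i ∈ t \ s, f i :=
    one_le_prod_real (fun i hi => h1 i (Finset.mem_sdiff.1 hi).1)
  have h0 : 0 ≤ ∏ i ∈ s, f i :=
    Finset.prod_nonneg (fun i hi => le_trans zero_le_one (h1 i (hst hi)))
  nlinarith

lemma prod_le_pow_card_real {α : Type*} {s : Finset α} {f : α → ℝ} {M : ℝ}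
    (h0 : ∀ i ∈ s, 0 ≤ f i) (h : ∀ i ∈ s, f i ≤ M) : ∏ i ∈ s, f i ≤ M ^ s.card := by
  calc ∏ i ∈ s, f i ≤ ∏ _i ∈ s, M := Finset.prod_le_prod h0 h
  _ = M ^ s.card := by rw [Finset.prod_const]

noncomputable def fp (S : Finset ℤ) (p : Nat.Primes) : ℝ :=
  (1 - (nuP p S : ℝ) / ((p : ℕ) : ℝ)) * ((1 - ((p : ℕ) : ℝ)⁻¹)⁻¹) ^ S.card

lemma one_le_nuP (p : ℕ) (S : Finset ℤ) (hS : S.Nonempty) : 1 ≤ nuP p S := by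
  rw [Nat.one_le_iff_ne_zero]
  simp [nuP, Finset.card_eq_zero, Finset.image_eq_empty, ← Finset.nonempty_iff_ne_empty, hS]

noncomputable def badP (T H : ℕ) (S : Finset ℤ) : Finset ℕ :=
  (Finset.Ioc T H).filter (fun p => p.Prime ∧ nuP p S < S.card)

lemma two_le_p (p : Nat.Primes) : (2:ℝ) ≤ ((p:ℕ):ℝ) := by exact_mod_cast p.2.two_le

lemma fp_nonneg {S : Finset ℤ} (hA : Admissible S) (p : Nat.Primes) : 0 ≤ fp S p := by
  have h1 : (nuP p S : ℝ) < ((p:ℕ):ℝ) := by exact_mod_cast hA p p.2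
  have hp : (0:ℝ) < ((p:ℕ):ℝ) := lt_of_le_of_lt (by positivity) h1
  have h2 : (nuP p S : ℝ)/((p:ℕ):ℝ) < 1 := by rwa [div_lt_one hp]
  have h3 := (inv_pos.2 (rinv_pos (two_le_p p))).le
  apply mul_nonneg (by linarith) (by positivity)

lemma fp_le_two_pow {S : Finset ℤ} (p : Nat.Primes) : fp S p ≤ 2 ^ S.card := by
  unfold fp
  have h0 : (0:ℝ) ≤ (nuP p S : ℝ)/((p:ℕ):ℝ) := by positivity
  have h3 := (inv_pos.2 (rinv_pos (two_le_p p))).le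
  calc (1 - (nuP p S : ℝ) / ((p : ℕ) : ℝ)) * ((1 - ((p : ℕ) : ℝ)⁻¹)⁻¹) ^ S.card
      ≤ 1 * ((1 - ((p : ℕ) : ℝ)⁻¹)⁻¹) ^ S.card := by
        apply mul_le_mul_of_nonneg_right (by linarith) (by positivity)
    _ ≤ 2 ^ S.card := by
        rw [one_mul]
        exact pow_le_pow_left₀ h3 (rinv_le_two (two_le_p p)) _

lemma fp_le_one {S : Finset ℤ} (p : Nat.Primes) (h : nuP p S = S.card) : fp S p ≤ 1 := by
  unfold fp
  have hq := rinv_pos (two_le_p p)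
  have hber := rbern (two_le_p p) S.card
  rw [h, inv_pow, ← div_eq_mul_inv, div_le_one (by positivity)]
  exact hber

lemma fp_le_bad {S : Finset ℤ} (p : Nat.Primes) (hS : S.Nonempty) :
    fp S p ≤ (1 + 2/((p:ℕ):ℝ)) ^ (S.card - 1) := by
  have h2 := two_le_p p
  have hq := rinv_pos h2
  set x := ((p:ℕ):ℝ)
  have hx : (0:ℝ) < x := by linarith
  have hnu : (1:ℝ) ≤ (nuP p S : ℝ) := by exact_mod_cast one_le_nuP p S hS
  have hcard : 1 ≤ S.card := Finset.card_pos.2 hS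
  have step1 : fp S p ≤ ((1 - x⁻¹)⁻¹) ^ (S.card - 1) := by
    have e : (1 - x⁻¹) * ((1 - x⁻¹)⁻¹) ^ S.card = ((1 - x⁻¹)⁻¹) ^ (S.card - 1) := by
      conv_lhs => rw [show S.card = (S.card - 1) + 1 by omega]
      rw [pow_succ, show (1 - x⁻¹) * ((1 - x⁻¹)⁻¹ ^ (S.card-1) * (1 - x⁻¹)⁻¹)
        = ((1 - x⁻¹) * (1 - x⁻¹)⁻¹) * (1 - x⁻¹)⁻¹ ^ (S.card-1) by ring,
        mul_inv_cancel₀ hq.ne', one_mul]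
    calc fp S p ≤ (1 - x⁻¹) * ((1 - x⁻¹)⁻¹) ^ S.card := by
          unfold fp
          apply mul_le_mul_of_nonneg_right _ (by positivity)
          have : x⁻¹ ≤ (nuP p S : ℝ)/x := by
            rw [inv_eq_one_div]
            gcongr
          linarith
      _ = _ := e
  calc fp S p ≤ _ := step1
    _ ≤ (1 + 2/x) ^ (S.card - 1) :=
        pow_le_pow_left₀ (inv_pos.2 hq).le (rinv_le h2) _

lemma one_le_prod_badP (T H : ℕ) (S : Finset ℤ) (m : ℕ) :
    (1:ℝ) ≤ ∏ p ∈ badP T H S, (1 + 2/(p:ℝ)) ^ m := by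
  apply one_le_prod_real
  intro p hp
  apply one_le_pow₀
  have : (0:ℝ) ≤ 2/(p:ℝ) := by positivity
  linarith

lemma singSeries_le {S : Finset ℤ} (k T H : ℕ) (hk : S.card = k) (hk2 : 2 ≤ k)
    (hsub : S ⊆ Finset.Icc 0 (H:ℤ)) :
    singSeries S ≤ 2^(k*T) * ∏ p ∈ badP T H S, (1 + 2/(p:ℝ)) ^ (k-1) := by
  have hSne : S.Nonempty := Finset.card_pos.1 (by omega)
  have hR1 : (1:ℝ) ≤ 2^(k*T) * ∏ p ∈ badP T H S, (1 + 2/(p:ℝ)) ^ (k-1) := by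
    have := one_le_prod_badP T H S (k-1)
    have h2 : (1:ℝ) ≤ 2^(k*T) := one_le_pow₀ (by norm_num)
    nlinarith
  unfold singSeries
  by_cases hA : Admissible S
  · rw [if_pos hA]
    have key : ∀ s : Finset Nat.Primes, ∏ p ∈ s, fp S p
        ≤ 2^(k*T) * ∏ p ∈ badP T H S, (1 + 2/(p:ℝ)) ^ (k-1) := by
      intro s
      classical
      set sb := s.filter (fun p : Nat.Primes => nuP p S < S.card) with hsb
      have h1 : ∏ p ∈ s, fp S p ≤ ∏ p ∈ sb, fp S p := by
        rw [← Finset.prod_filter_mul_prod_filter_not s (fun p : Nat.Primes => nuP p S < S.card)]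
        have hle1 : ∏ p ∈ s.filter (fun p : Nat.Primes => ¬ nuP p S < S.card), fp S p ≤ 1 := by
          apply Finset.prod_le_one
          · intro p _; exact fp_nonneg hA p
          · intro p hp
            rw [Finset.mem_filter] at hp
            exact fp_le_one p (le_antisymm (nuP_le_card _ _) (by omega))
        have hnn : (0:ℝ) ≤ ∏ p ∈ sb, fp S p :=
          Finset.prod_nonneg (fun p _ => fp_nonneg hA p)
        nlinarith
      set sb1 := sb.filter (fun p : Nat.Primes => (p:ℕ) ≤ T) with hsb1
      set sb2 := sb.filter (fun p : Nat.Primes => ¬ (p:ℕ) ≤ T) with hsb2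
      have hsplit : ∏ p ∈ sb, fp S p = (∏ p ∈ sb1, fp S p) * ∏ p ∈ sb2, fp S p :=
        (Finset.prod_filter_mul_prod_filter_not sb _ _).symm
      have hb1 : ∏ p ∈ sb1, fp S p ≤ 2^(k*T) := by
        calc ∏ p ∈ sb1, fp S p ≤ ((2:ℝ)^k) ^ sb1.card := by
              apply prod_le_pow_card_real (fun p _ => fp_nonneg hA p)
              intro p _
              simpa [hk] using fp_le_two_pow (S := S) p
          _ ≤ ((2:ℝ)^k) ^ T := by
              apply pow_le_pow_right₀ (one_le_pow₀ (by norm_num))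
              calc sb1.card ≤ (Finset.Icc 2 T).card := by
                    apply Finset.card_le_card_of_injOn (fun p : Nat.Primes => (p:ℕ))
                    · intro p hp
                      simp only [Finset.mem_coe, hsb1, Finset.mem_filter] at hp
                      exact Finset.mem_Icc.2 ⟨p.2.two_le, hp.2⟩
                    · intro a _ b _ hab
                      exact Nat.Primes.coe_nat_injective hab
                _ ≤ T := by rw [Nat.card_Icc]; omega
          _ = 2^(k*T) := by rw [← pow_mul]
      have hb2 : ∏ p ∈ sb2, fp S p ≤ ∏ p ∈ badP T H S, (1 + 2/(p:ℝ)) ^ (k-1) := by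
        calc ∏ p ∈ sb2, fp S p ≤ ∏ p ∈ sb2, (1 + 2/((p:ℕ):ℝ)) ^ (k-1) := by
              apply Finset.prod_le_prod (fun p _ => fp_nonneg hA p)
              intro p _
              simpa [hk] using fp_le_bad (S := S) p hSne
          _ = ∏ q ∈ sb2.image (fun p : Nat.Primes => (p:ℕ)), (1 + 2/(q:ℝ)) ^ (k-1) := by
              rw [Finset.prod_image]
              intro a _ b _ hab
              exact Nat.Primes.coe_nat_injective hab
          _ ≤ ∏ p ∈ badP T H S, (1 + 2/(p:ℝ)) ^ (k-1) := by
              apply prod_le_prod_subset_real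
              · intro q hq
                rw [Finset.mem_image] at hq
                obtain ⟨p, hp, rfl⟩ := hq
                rw [hsb2, Finset.mem_filter, hsb, Finset.mem_filter] at hp
                rw [badP, Finset.mem_filter, Finset.mem_Ioc]
                exact ⟨⟨by omega, bad_prime_le _ _ _ hsub hp.1.2⟩, p.2, hp.1.2⟩
              · intro q _
                apply one_le_pow₀
                have : (0:ℝ) ≤ 2/(q:ℝ) := by positivity
                linarith
      rw [hsplit] at h1
      calc ∏ p ∈ s, fp S p ≤ _ := h1
        _ ≤ 2^(k*T) * ∏ p ∈ badP T H S, (1 + 2/(p:ℝ)) ^ (k-1) := by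
            apply mul_le_mul hb1 hb2
            · exact Finset.prod_nonneg (fun p _ => fp_nonneg hA p)
            · positivity
    show ∏' p : Nat.Primes, fp S p ≤ _
    by_cases hM : Multipliable (fun p : Nat.Primes => fp S p)
    · exact le_of_tendsto' hM.hasProd key
    · rw [tprod_eq_one_of_not_multipliable hM]; exact hR1
  · rw [if_neg hA]; linarith

lemma singSeries_nonneg (S : Finset ℤ) : 0 ≤ singSeries S := by
  unfold singSeries
  by_cases hA : Admissible S
  · rw [if_pos hA]
    by_cases hM : Multipliable (fun p : Nat.Primes => fp S p)
    · exact ge_of_tendsto' hM.hasProd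
        (fun s => Finset.prod_nonneg (fun p _ => fp_nonneg hA p))
    · rw [show (fun p : Nat.Primes => (1 - (nuP p S : ℝ) / ((p:ℕ):ℝ)) *
          ((1 - ((p : ℕ) : ℝ)⁻¹)⁻¹) ^ S.card) = fun p => fp S p from rfl,
        tprod_eq_one_of_not_multipliable hM]
      norm_num
  · rw [if_neg hA]

/-- the pairs of a finite set -/
noncomputable def pairsOf (S : Finset ℤ) : Finset (ℤ × ℤ) :=
  (S ×ˢ S).filter (fun e => e.1 < e.2)

/-- primes in `(T, H]` dividing `e.2 - e.1` -/
noncomputable def PE (T H : ℕ) (e : ℤ × ℤ) : Finset ℕ :=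
  (Finset.Ioc T H).filter (fun p => p.Prime ∧ (p:ℤ) ∣ (e.2 - e.1))

/-- the arithmetic weight -/
noncomputable def GF (T H B : ℕ) (d : ℕ) : ℝ :=
  ∏ p ∈ (Finset.Ioc T H).filter (fun p => p.Prime ∧ p ∣ d), (1 + (B:ℝ)/(p:ℝ))

lemma GF_one_le (T H B d : ℕ) : 1 ≤ GF T H B d :=
  one_le_prod_real (fun p _ => by
    have : (0:ℝ) ≤ (B:ℝ)/(p:ℝ) := by positivity
    linarith)

lemma GF_nonneg (T H B d : ℕ) : 0 ≤ GF T H B d := le_trans zero_le_one (GF_one_le T H B d)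

lemma main1 (S : Finset ℤ) (k r N B T H : ℕ)
    (hk : S.card = k) (hk2 : 2 ≤ k) (hN1 : 1 ≤ N)
    (hN : (k-1)*r*(k*k) ≤ N) (hB : B = 4*N) (hT : T = B*B)
    (hsub : S ⊆ Finset.Icc 0 (H:ℤ)) :
    singSeries S ^ r ≤ 2^(k*T*r) * ∑ e ∈ pairsOf S, GF T H B ((e.2 - e.1).toNat) := by
  classical
  set m := (k-1)*r with hm
  have hpow : singSeries S ^ r ≤ 2^(k*T*r) * ∏ p ∈ badP T H S, (1+2/(p:ℝ))^m := by
    have h1 := pow_le_pow_left₀ (singSeries_nonneg S) (singSeries_le k T H hk hk2 hsub) r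
    calc singSeries S ^ r ≤ _ := h1
      _ = 2^(k*T*r) * ∏ p ∈ badP T H S, (1+2/(p:ℝ))^m := by
        rw [mul_pow, ← pow_mul, ← Finset.prod_pow]
        congr 1
        apply Finset.prod_congr rfl
        intro p _
        rw [← pow_mul]
  -- choice of pairs
  have hch : ∀ p : ℕ, ∃ e : ℤ × ℤ, p ∈ badP T H S → e ∈ pairsOf S ∧ (p:ℤ) ∣ (e.2 - e.1) := by
    intro p
    by_cases hp : p ∈ badP T H S
    · rw [badP, Finset.mem_filter] at hp
      obtain ⟨x, hx, y, hy, hlt, hdvd⟩ := exists_pair_of_nuP_lt p S hp.2.2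
      exact ⟨(x, y), fun _ => ⟨Finset.mem_filter.2 ⟨Finset.mem_product.2 ⟨hx, hy⟩, hlt⟩, hdvd⟩⟩
    · exact ⟨(0,0), fun h => absurd h hp⟩
  choose φ hφ using hch
  set gE : ℤ × ℤ → ℝ := fun e => ∏ p ∈ PE T H e, (1+2/(p:ℝ))^m with hgE
  have h1gE : ∀ e, 1 ≤ gE e := by
    intro e
    apply one_le_prod_real
    intro p _
    apply one_le_pow₀
    have : (0:ℝ) ≤ 2/(p:ℝ) := by positivity
    linarith
  have hstep2 : ∏ p ∈ badP T H S, (1+2/(p:ℝ))^m ≤ ∏ e ∈ pairsOf S, gE e := by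
    rw [← Finset.prod_fiberwise_of_maps_to (fun p hp => (hφ p hp).1)
      (fun p : ℕ => (1+2/(p:ℝ))^m)]
    apply Finset.prod_le_prod
    · intro e _
      apply Finset.prod_nonneg
      intro p _
      positivity
    · intro e he
      apply prod_le_prod_subset_real
      · intro p hp
        rw [Finset.mem_filter] at hp
        obtain ⟨hp1, hp2⟩ := hp
        have := (hφ p hp1).2
        rw [badP, Finset.mem_filter] at hp1
        rw [PE, Finset.mem_filter]
        exact ⟨hp1.1, hp1.2.1, hp2 ▸ this⟩
      · intro p _
        apply one_le_pow₀
        have : (0:ℝ) ≤ 2/(p:ℝ) := by positivity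
        linarith
  -- max step
  have hpairs_ne : (pairsOf S).Nonempty := by
    obtain ⟨a, ha, b, hb, hab⟩ := Finset.one_lt_card.1 (by omega : 1 < S.card)
    rcases lt_or_gt_of_ne hab with h | h
    · exact ⟨(a, b), Finset.mem_filter.2 ⟨Finset.mem_product.2 ⟨ha, hb⟩, h⟩⟩
    · exact ⟨(b, a), Finset.mem_filter.2 ⟨Finset.mem_product.2 ⟨hb, ha⟩, h⟩⟩
  obtain ⟨e₀, he₀, hmax⟩ := Finset.exists_max_image (pairsOf S) gE hpairs_ne
  have hstep3 : ∏ e ∈ pairsOf S, gE e ≤ gE e₀ ^ (k*k) := by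
    calc ∏ e ∈ pairsOf S, gE e ≤ gE e₀ ^ (pairsOf S).card :=
          prod_le_pow_card_real (fun e he => le_trans zero_le_one (h1gE e)) hmax
      _ ≤ gE e₀ ^ (k*k) := by
          apply pow_le_pow_right₀ (h1gE e₀)
          calc (pairsOf S).card ≤ (S ×ˢ S).card := Finset.card_filter_le _ _
            _ = k*k := by rw [Finset.card_product, hk]
  have hstep4 : gE e₀ ^ (k*k) ≤ GF T H B ((e₀.2 - e₀.1).toNat) := by
    have hd : (0:ℤ) < e₀.2 - e₀.1 := by
      have := (Finset.mem_filter.1 he₀).2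
      omega
    have hfe : PE T H e₀ = (Finset.Ioc T H).filter
        (fun p => p.Prime ∧ p ∣ (e₀.2 - e₀.1).toNat) := by
      apply Finset.filter_congr
      intro p _
      have hteq : ((e₀.2 - e₀.1).toNat : ℤ) = e₀.2 - e₀.1 := Int.toNat_of_nonneg hd.le
      have hiff := Int.natCast_dvd_natCast (m := p) (n := (e₀.2 - e₀.1).toNat)
      rw [hteq] at hiff
      exact and_congr_right (fun _ => hiff)
    rw [hgE, ← Finset.prod_pow, GF, ← hfe]
    apply Finset.prod_le_prod
    · intro p _; positivity
    · intro p hp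
      rw [PE, Finset.mem_filter, Finset.mem_Ioc] at hp
      have hp4N : 4*N ≤ p := by
        have : T < p := hp.1.1
        nlinarith
      calc ((1+2/(p:ℝ))^m)^(k*k) = (1+2/(p:ℝ))^(m*(k*k)) := by rw [← pow_mul]
        _ ≤ (1+2/(p:ℝ))^N := by
            apply pow_le_pow_right₀ _ hN
            have : (0:ℝ) ≤ 2/(p:ℝ) := by positivity
            linarith
        _ ≤ 1 + 4*N/(p:ℝ) := pow_one_add_le N p hN1 hp4N
        _ = 1 + (B:ℝ)/(p:ℝ) := by rw [hB]; push_cast; ring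
  have hstep5 : GF T H B ((e₀.2 - e₀.1).toNat) ≤ ∑ e ∈ pairsOf S, GF T H B ((e.2 - e.1).toNat) :=
    Finset.single_le_sum (f := fun e => GF T H B ((e.2 - e.1).toNat))
      (fun e _ => GF_nonneg T H B _) he₀
  have h2pow : (0:ℝ) ≤ 2^(k*T*r) := by positivity
  calc singSeries S ^ r ≤ _ := hpow
    _ ≤ 2^(k*T*r) * ∑ e ∈ pairsOf S, GF T H B ((e.2 - e.1).toNat) := by
        apply mul_le_mul_of_nonneg_left _ h2pow
        exact le_trans hstep2 (le_trans hstep3 (le_trans hstep4 hstep5))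

noncomputable def zconst : ℝ := ∑' q : ℕ, (q:ℝ)^(-(3/2:ℝ))

lemma zconst_summable : Summable (fun q : ℕ => (q:ℝ)^(-(3/2:ℝ))) := by
  have h := Real.summable_one_div_nat_rpow (p := (3/2:ℝ)).2 (by norm_num)
  apply h.congr
  intro n
  rw [Real.rpow_neg (by positivity), one_div]

lemma zconst_nonneg : 0 ≤ zconst :=
  tsum_nonneg (fun q => Real.rpow_nonneg (by positivity) _)

noncomputable def wq (T B q : ℕ) : ℝ :=
  if ∀ p ∈ q.primeFactors, T < p then (B:ℝ)^(q.primeFactors.card)/(q:ℝ) else 0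

lemma wq_nonneg (T B q : ℕ) : 0 ≤ wq T B q := by
  unfold wq; split <;> positivity

lemma GF_le_sum_wq (T H B d : ℕ) (hd1 : 1 ≤ d) (hdH : d ≤ H) :
    GF T H B d ≤ ∑ q ∈ (Finset.Icc 1 H).filter (· ∣ d), wq T B q := by
  classical
  unfold GF
  set P := (Finset.Ioc T H).filter (fun p => p.Prime ∧ p ∣ d) with hP
  have hexp : ∏ p ∈ P, (1 + (B:ℝ)/(p:ℝ)) = ∑ t ∈ P.powerset, ∏ p ∈ t, (B:ℝ)/(p:ℝ) := by
    have := Finset.prod_add (fun p : ℕ => (B:ℝ)/(p:ℝ)) (fun _ : ℕ => (1:ℝ)) P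
    simp only [Finset.prod_const_one, mul_one] at this
    calc ∏ p ∈ P, (1 + (B:ℝ)/(p:ℝ)) = ∏ p ∈ P, ((B:ℝ)/(p:ℝ) + 1) := by
          apply Finset.prod_congr rfl; intro p _; ring
      _ = _ := this
  rw [hexp]
  have hprime : ∀ t ∈ P.powerset, ∀ p ∈ t, p.Prime := by
    intro t ht p hp
    have := (Finset.mem_powerset.1 ht) hp
    rw [hP, Finset.mem_filter] at this
    exact this.2.1
  have hinj : Set.InjOn (fun t : Finset ℕ => ∏ p ∈ t, p) P.powerset := by
    intro t1 h1 t2 h2 he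
    have e1 : (∏ p ∈ t1, p).primeFactors = t1 := Nat.primeFactors_prod (hprime t1 h1)
    have e2 : (∏ p ∈ t2, p).primeFactors = t2 := Nat.primeFactors_prod (hprime t2 h2)
    rw [← e1, ← e2]
    simp only at he
    rw [he]
  have himage : ∑ t ∈ P.powerset, ∏ p ∈ t, (B:ℝ)/(p:ℝ)
      = ∑ q ∈ P.powerset.image (fun t => ∏ p ∈ t, p), wq T B q := by
    rw [Finset.sum_image (fun t1 h1 t2 h2 he => hinj h1 h2 he)]
    apply Finset.sum_congr rfl
    intro t ht
    have e1 : (∏ p ∈ t, p).primeFactors = t := Nat.primeFactors_prod (hprime t ht)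
    have hcond : ∀ p ∈ (∏ p ∈ t, p).primeFactors, T < p := by
      rw [e1]; intro p hp
      have := (Finset.mem_powerset.1 ht) hp
      rw [hP, Finset.mem_filter, Finset.mem_Ioc] at this
      exact this.1.1
    rw [wq, if_pos hcond, e1]
    rw [Finset.prod_div_distrib, Finset.prod_const, Nat.cast_prod]
  rw [himage]
  apply Finset.sum_le_sum_of_subset_of_nonneg
  · intro q hq
    rw [Finset.mem_image] at hq
    obtain ⟨t, ht, rfl⟩ := hq
    have hdvd : (∏ p ∈ t, p) ∣ d := by
      apply Finset.prod_primes_dvd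
      · intro p hp; exact (hprime t ht p hp).prime
      · intro p hp
        have := (Finset.mem_powerset.1 ht) hp
        rw [hP, Finset.mem_filter] at this
        exact this.2.2
    rw [Finset.mem_filter, Finset.mem_Icc]
    have hpos : 1 ≤ ∏ p ∈ t, p :=
      Finset.one_le_prod' (fun p hp => (hprime t ht p hp).one_lt.le)
    exact ⟨⟨hpos, le_trans (Nat.le_of_dvd (by omega) hdvd) hdH⟩, hdvd⟩
  · intro q _ _; exact wq_nonneg T B q

lemma wq_mul_le (T B H q : ℕ) (hT : T = B*B) (hq1 : 1 ≤ q) :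
    wq T B q * ((H/q : ℕ) : ℝ) ≤ (H:ℝ) * (q:ℝ)^(-(3/2:ℝ)) := by
  have hqR : (0:ℝ) < q := by exact_mod_cast hq1
  unfold wq
  split
  case isFalse => simp; positivity
  case isTrue hc =>
    have hBsq : ((B:ℝ)^(q.primeFactors.card))^2 ≤ (q:ℝ) := by
      have h1 : (B*B)^(q.primeFactors.card) ≤ ∏ p ∈ q.primeFactors, p := by
        apply Finset.pow_card_le_prod
        intro p hp
        have := hc p hp
        omega
      have h2 : (∏ p ∈ q.primeFactors, p) ≤ q :=
        Nat.le_of_dvd (by omega) (Nat.prod_primeFactors_dvd q)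
      calc ((B:ℝ)^(q.primeFactors.card))^2 = (((B*B)^(q.primeFactors.card) : ℕ) : ℝ) := by
            push_cast; ring
        _ ≤ (q:ℝ) := by exact_mod_cast le_trans h1 h2
    have hBle : (B:ℝ)^(q.primeFactors.card) ≤ Real.sqrt q := by
      rw [show ((q:ℝ)) = Real.sqrt q * Real.sqrt q from (Real.mul_self_sqrt hqR.le).symm] at hBsq
      nlinarith [Real.sqrt_nonneg (q:ℝ), pow_nonneg (by positivity : (0:ℝ) ≤ (B:ℝ)) q.primeFactors.card]
    have hHq : ((H/q : ℕ) : ℝ) ≤ (H:ℝ)/(q:ℝ) := Nat.cast_div_le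
    have hstep : (B:ℝ)^(q.primeFactors.card)/(q:ℝ) * ((H/q : ℕ) : ℝ)
        ≤ (Real.sqrt q/(q:ℝ)) * ((H:ℝ)/(q:ℝ)) := by
      apply mul_le_mul
      · gcongr
      · exact hHq
      · positivity
      · positivity
    calc (B:ℝ)^(q.primeFactors.card)/(q:ℝ) * ((H/q : ℕ) : ℝ) ≤ _ := hstep
      _ = (H:ℝ) * (Real.sqrt q / (q:ℝ)^2) := by ring
      _ = (H:ℝ) * (q:ℝ)^(-(3/2:ℝ)) := by
          congr 1
          rw [Real.sqrt_eq_rpow, show ((q:ℝ)^2) = (q:ℝ)^((2:ℝ)) from (Real.rpow_two _).symm,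
            ← Real.rpow_sub hqR]
          norm_num

lemma main3 (T H B : ℕ) (hT : T = B*B) :
    ∑ d ∈ Finset.Icc 1 H, GF T H B d ≤ zconst * H := by
  classical
  have step1 : ∑ d ∈ Finset.Icc 1 H, GF T H B d
      ≤ ∑ d ∈ Finset.Icc 1 H, ∑ q ∈ (Finset.Icc 1 H).filter (· ∣ d), wq T B q := by
    apply Finset.sum_le_sum
    intro d hd
    rw [Finset.mem_Icc] at hd
    exact GF_le_sum_wq T H B d hd.1 hd.2
  have step2 : ∑ d ∈ Finset.Icc 1 H, ∑ q ∈ (Finset.Icc 1 H).filter (· ∣ d), wq T B q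
      = ∑ q ∈ Finset.Icc 1 H, wq T B q * (((Finset.Icc 1 H).filter (fun d => q ∣ d)).card : ℝ) := by
    have e1 : ∀ d, ∑ q ∈ (Finset.Icc 1 H).filter (· ∣ d), wq T B q
        = ∑ q ∈ Finset.Icc 1 H, if q ∣ d then wq T B q else 0 := by
      intro d; rw [Finset.sum_filter]
    simp only [e1]
    rw [Finset.sum_comm]
    apply Finset.sum_congr rfl
    intro q _
    rw [← Finset.sum_filter, Finset.sum_const, nsmul_eq_mul, mul_comm]
  have hcard : ∀ q : ℕ, ((Finset.Icc 1 H).filter (fun d => q ∣ d)).card = H / q := by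
    intro q
    have e : Finset.Icc 1 H = Finset.Ioc 0 H := by
      ext x; rw [Finset.mem_Icc, Finset.mem_Ioc]; omega
    rw [e]
    exact Nat.Ioc_filter_dvd_card_eq_div H q
  have step3 : ∑ q ∈ Finset.Icc 1 H, wq T B q * (((Finset.Icc 1 H).filter (fun d => q ∣ d)).card : ℝ)
      ≤ ∑ q ∈ Finset.Icc 1 H, (H:ℝ) * (q:ℝ)^(-(3/2:ℝ)) := by
    apply Finset.sum_le_sum
    intro q hq
    rw [Finset.mem_Icc] at hq
    rw [hcard q]
    exact wq_mul_le T B H q hT hq.1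
  have step4 : ∑ q ∈ Finset.Icc 1 H, (H:ℝ) * (q:ℝ)^(-(3/2:ℝ)) ≤ zconst * H := by
    rw [← Finset.mul_sum, mul_comm]
    apply mul_le_mul_of_nonneg_right _ (by positivity)
    exact Summable.sum_le_tsum _ (fun q _ => Real.rpow_nonneg (by positivity) _) zconst_summable
  linarith

lemma sum_le_sum_reindex_real {α β : Type*} [DecidableEq β] {s : Finset α} {t : Finset β}
    (m : α → β) (hm : ∀ a ∈ s, m a ∈ t) (hinj : ∀ a ∈ s, ∀ a' ∈ s, m a = m a' → a = a')
    {f : α → ℝ} {g : β → ℝ} (hfg : ∀ a ∈ s, f a = g (m a)) (hg : ∀ b ∈ t, 0 ≤ g b) :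
    ∑ a ∈ s, f a ≤ ∑ b ∈ t, g b := by
  classical
  calc ∑ a ∈ s, f a = ∑ a ∈ s, g (m a) := Finset.sum_congr rfl hfg
    _ = ∑ b ∈ s.image m, g b := (Finset.sum_image hinj).symm
    _ ≤ ∑ b ∈ t, g b := by
        apply Finset.sum_le_sum_of_subset_of_nonneg
        · intro b hb
          obtain ⟨a, ha, rfl⟩ := Finset.mem_image.1 hb
          exact hm a ha
        · intro b hb _; exact hg b hb

lemma card_Icc_int (H : ℕ) : (Finset.Icc (1:ℤ) (H:ℤ)).card = H := by
  rw [Int.card_Icc]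
  omega

lemma count_one (ν H : ℕ) (y : ℤ) :
    ((((Finset.Icc (1:ℤ) (H:ℤ)).powersetCard ν)).filter (fun D => y ∈ D)).card ≤ H^(ν-1) := by
  classical
  have h1 : ((((Finset.Icc (1:ℤ) (H:ℤ)).powersetCard ν)).filter (fun D => y ∈ D)).card
      ≤ ((Finset.Icc (1:ℤ) (H:ℤ)).powersetCard (ν-1)).card := by
    apply Finset.card_le_card_of_injOn (fun D => D.erase y)
    · intro D hD
      rw [Finset.mem_coe, Finset.mem_filter, Finset.mem_powersetCard] at hD
      rw [Finset.mem_coe, Finset.mem_powersetCard]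
      refine ⟨le_trans (Finset.erase_subset y D) hD.1.1, ?_⟩
      rw [Finset.card_erase_of_mem hD.2, hD.1.2]
    · intro D1 h1 D2 h2 he
      rw [Finset.coe_filter, Set.mem_setOf_eq] at h1 h2
      simp only at he
      rw [← Finset.insert_erase h1.2, ← Finset.insert_erase h2.2, he]
  rw [Finset.card_powersetCard, card_Icc_int] at h1
  exact le_trans h1 (Nat.choose_le_pow _ _)

lemma count_two (ν H : ℕ) (hν : 1 ≤ ν) (y z : ℤ) (hyz : y ≠ z) :
    (((((Finset.Icc (1:ℤ) (H:ℤ)).powersetCard ν)).filter (fun D => y ∈ D ∧ z ∈ D)).card : ℝ)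
      ≤ ((ν:ℝ) - 1) * (H:ℝ)^(ν-2) := by
  classical
  rcases eq_or_lt_of_le hν with h1 | h2
  · -- ν = 1 : cardinality is zero
    have : ((((Finset.Icc (1:ℤ) (H:ℤ)).powersetCard ν)).filter (fun D => y ∈ D ∧ z ∈ D)) = ∅ := by
      rw [Finset.filter_eq_empty_iff]
      intro D hD
      rw [Finset.mem_powersetCard] at hD
      intro ⟨hy, hz⟩
      have := Finset.one_lt_card.2 ⟨y, hy, z, hz, hyz⟩
      omega
    rw [this]
    simp only [Finset.card_empty, Nat.cast_zero]
    rw [← h1]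
    norm_num
  · have hcnt : ((((Finset.Icc (1:ℤ) (H:ℤ)).powersetCard ν)).filter
        (fun D => y ∈ D ∧ z ∈ D)).card ≤ ((Finset.Icc (1:ℤ) (H:ℤ)).powersetCard (ν-2)).card := by
      apply Finset.card_le_card_of_injOn (fun D => (D.erase y).erase z)
      · intro D hD
        rw [Finset.mem_coe, Finset.mem_filter, Finset.mem_powersetCard] at hD
        rw [Finset.mem_coe, Finset.mem_powersetCard]
        refine ⟨le_trans (Finset.erase_subset _ _) (le_trans (Finset.erase_subset _ _) hD.1.1), ?_⟩
        have hz' : z ∈ D.erase y := Finset.mem_erase.2 ⟨(Ne.symm hyz), hD.2.2⟩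
        rw [Finset.card_erase_of_mem hz', Finset.card_erase_of_mem hD.2.1, hD.1.2]
        omega
      · intro D1 hh1 D2 hh2 he
        rw [Finset.coe_filter, Set.mem_setOf_eq] at hh1 hh2
        simp only at he
        have e1 : ∀ D : Finset ℤ, y ∈ D → z ∈ D → D = insert y (insert z ((D.erase y).erase z)) := by
          intro D hy hz
          rw [Finset.insert_erase (Finset.mem_erase.2 ⟨Ne.symm hyz, hz⟩), Finset.insert_erase hy]
        rw [e1 D1 hh1.2.1 hh1.2.2, e1 D2 hh2.2.1 hh2.2.2, he]
    rw [Finset.card_powersetCard, card_Icc_int] at hcnt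
    have : ((((Finset.Icc (1:ℤ) (H:ℤ)).powersetCard ν)).filter
        (fun D => y ∈ D ∧ z ∈ D)).card ≤ H^(ν-2) := le_trans hcnt (Nat.choose_le_pow _ _)
    have hcast : (((((Finset.Icc (1:ℤ) (H:ℤ)).powersetCard ν)).filter
        (fun D => y ∈ D ∧ z ∈ D)).card : ℝ) ≤ ((H:ℝ))^(ν-2) := by
      exact_mod_cast this
    have hν2 : (1:ℝ) ≤ (ν:ℝ) - 1 := by
      have : (2:ℝ) ≤ (ν:ℝ) := by exact_mod_cast h2
      linarith
    nlinarith [pow_nonneg (by positivity : (0:ℝ) ≤ (H:ℝ)) (ν-2)]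

lemma main2 (ν T B H : ℕ) (hν : 1 ≤ ν) :
    ∑ D ∈ (Finset.Icc (1:ℤ) (H:ℤ)).powersetCard ν,
        ∑ e ∈ pairsOf (insert 0 D), GF T H B ((e.2 - e.1).toNat)
      ≤ (ν:ℝ) * (H:ℝ)^(ν-1) * ∑ d ∈ Finset.Icc 1 H, GF T H B d := by
  classical
  set PS := (Finset.Icc (1:ℤ) (H:ℤ)).powersetCard ν with hPS
  set P := ((Finset.Icc (0:ℤ) (H:ℤ)) ×ˢ (Finset.Icc (0:ℤ) (H:ℤ))).filter
      (fun e => e.1 < e.2) with hPdef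
  have hmemIcc : ∀ D ∈ PS, ∀ x ∈ insert (0:ℤ) D, x ∈ Finset.Icc (0:ℤ) (H:ℤ) := by
    intro D hD x hx
    rw [hPS, Finset.mem_powersetCard] at hD
    rcases Finset.mem_insert.1 hx with rfl | hx'
    · rw [Finset.mem_Icc]; constructor <;> [rfl; positivity]
    · have := hD.1 hx'
      rw [Finset.mem_Icc] at this ⊢
      omega
  have hsubP : ∀ D ∈ PS, pairsOf (insert 0 D) ⊆ P := by
    intro D hD e he
    rw [pairsOf, Finset.mem_filter, Finset.mem_product] at he
    rw [hPdef, Finset.mem_filter, Finset.mem_product]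
    exact ⟨⟨hmemIcc D hD _ he.1.1, hmemIcc D hD _ he.1.2⟩, he.2⟩
  have step1 : ∀ D ∈ PS, ∑ e ∈ pairsOf (insert 0 D), GF T H B ((e.2 - e.1).toNat)
      = ∑ e ∈ P, if e ∈ pairsOf (insert 0 D) then GF T H B ((e.2 - e.1).toNat) else 0 := by
    intro D hD
    rw [← Finset.sum_filter]
    congr 1
    ext e
    rw [Finset.mem_filter]
    exact ⟨fun hmem => ⟨hsubP D hD hmem, hmem⟩, fun h => h.2⟩
  rw [Finset.sum_congr rfl step1, Finset.sum_comm]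
  have step2 : ∀ e ∈ P, ∑ D ∈ PS, (if e ∈ pairsOf (insert 0 D) then GF T H B ((e.2 - e.1).toNat) else 0)
      = GF T H B ((e.2 - e.1).toNat) * ((PS.filter (fun D => e ∈ pairsOf (insert 0 D))).card : ℝ) := by
    intro e _
    rw [← Finset.sum_filter, Finset.sum_const, nsmul_eq_mul, mul_comm]
  rw [Finset.sum_congr rfl step2]
  rw [← Finset.sum_filter_add_sum_filter_not P (fun e => e.1 = 0)]
  set SG := ∑ d ∈ Finset.Icc 1 H, GF T H B d with hSG
  have hSGnn : 0 ≤ SG := Finset.sum_nonneg (fun d _ => GF_nonneg T H B d)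
  have hbound0 : ∑ e ∈ P.filter (fun e => e.1 = 0),
      GF T H B ((e.2 - e.1).toNat) * ((PS.filter (fun D => e ∈ pairsOf (insert 0 D))).card : ℝ)
      ≤ (H:ℝ)^(ν-1) * SG := by
    have hterm : ∀ e ∈ P.filter (fun e => e.1 = 0),
        GF T H B ((e.2 - e.1).toNat) * ((PS.filter (fun D => e ∈ pairsOf (insert 0 D))).card : ℝ)
        ≤ GF T H B ((e.2 - e.1).toNat) * (H:ℝ)^(ν-1) := by
      intro e he
      rw [Finset.mem_filter] at he
      obtain ⟨heP, he0⟩ := he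
      rw [hPdef, Finset.mem_filter, Finset.mem_product, Finset.mem_Icc, Finset.mem_Icc] at heP
      apply mul_le_mul_of_nonneg_left _ (GF_nonneg T H B _)
      have hsub2 : PS.filter (fun D => e ∈ pairsOf (insert 0 D)) ⊆ PS.filter (fun D => e.2 ∈ D) := by
        intro D hD'
        rw [Finset.mem_filter] at hD' ⊢
        refine ⟨hD'.1, ?_⟩
        have hD := hD'.2
        rw [pairsOf, Finset.mem_filter, Finset.mem_product] at hD
        rcases Finset.mem_insert.1 hD.1.2 with h | h
        · exfalso
          have hlt' : e.1 < e.2 := hD.2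
          omega
        · exact h
      calc ((PS.filter (fun D => e ∈ pairsOf (insert 0 D))).card : ℝ)
          ≤ ((PS.filter (fun D => e.2 ∈ D)).card : ℝ) := by
            exact_mod_cast Finset.card_le_card hsub2
        _ ≤ (H:ℝ)^(ν-1) := by exact_mod_cast count_one ν H e.2
    calc ∑ e ∈ P.filter (fun e => e.1 = 0), GF T H B ((e.2 - e.1).toNat) *
          ((PS.filter (fun D => e ∈ pairsOf (insert 0 D))).card : ℝ)
        ≤ ∑ e ∈ P.filter (fun e => e.1 = 0), GF T H B ((e.2 - e.1).toNat) * (H:ℝ)^(ν-1) :=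
          Finset.sum_le_sum hterm
      _ = (H:ℝ)^(ν-1) * ∑ e ∈ P.filter (fun e => e.1 = 0), GF T H B ((e.2 - e.1).toNat) := by
          rw [Finset.mul_sum]
          exact Finset.sum_congr rfl (fun e _ => by ring)
      _ ≤ (H:ℝ)^(ν-1) * SG := by
          apply mul_le_mul_of_nonneg_left _ (by positivity)
          apply sum_le_sum_reindex_real (fun e => (e.2).toNat)
          · intro e he
            rw [Finset.mem_filter] at he
            obtain ⟨heP, he0⟩ := he
            rw [hPdef, Finset.mem_filter, Finset.mem_product, Finset.mem_Icc, Finset.mem_Icc] at heP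
            rw [Finset.mem_Icc]
            omega
          · intro e he e' he' hee
            rw [Finset.mem_filter] at he he'
            obtain ⟨heP, he0⟩ := he
            obtain ⟨heP', he0'⟩ := he'
            rw [hPdef, Finset.mem_filter, Finset.mem_product, Finset.mem_Icc, Finset.mem_Icc]
              at heP heP'
            have h2 : e.2 = e'.2 := by omega
            exact Prod.ext (by rw [he0, he0']) h2
          · intro e he
            rw [Finset.mem_filter] at he
            rw [he.2, sub_zero]
          · intro d _; exact GF_nonneg T H B d
  have hbound1 : ∑ e ∈ P.filter (fun e => ¬ e.1 = 0),
      GF T H B ((e.2 - e.1).toNat) * ((PS.filter (fun D => e ∈ pairsOf (insert 0 D))).card : ℝ)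
      ≤ ((ν:ℝ) - 1) * (H:ℝ)^(ν-2) * ((H:ℝ) * SG) := by
    have hterm : ∀ e ∈ P.filter (fun e => ¬ e.1 = 0),
        GF T H B ((e.2 - e.1).toNat) * ((PS.filter (fun D => e ∈ pairsOf (insert 0 D))).card : ℝ)
        ≤ GF T H B ((e.2 - e.1).toNat) * (((ν:ℝ) - 1) * (H:ℝ)^(ν-2)) := by
      intro e he
      rw [Finset.mem_filter] at he
      obtain ⟨heP, hne⟩ := he
      rw [hPdef, Finset.mem_filter, Finset.mem_product, Finset.mem_Icc, Finset.mem_Icc] at heP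
      apply mul_le_mul_of_nonneg_left _ (GF_nonneg T H B _)
      have hsub2 : PS.filter (fun D => e ∈ pairsOf (insert 0 D))
          ⊆ PS.filter (fun D => e.1 ∈ D ∧ e.2 ∈ D) := by
        intro D hD'
        rw [Finset.mem_filter] at hD' ⊢
        refine ⟨hD'.1, ?_⟩
        have hD := hD'.2
        rw [pairsOf, Finset.mem_filter, Finset.mem_product] at hD
        constructor
        · rcases Finset.mem_insert.1 hD.1.1 with h | h
          · exact absurd h hne
          · exact h
        · rcases Finset.mem_insert.1 hD.1.2 with h | h
          · exfalso
            have hlt' : e.1 < e.2 := hD.2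
            omega
          · exact h
      calc ((PS.filter (fun D => e ∈ pairsOf (insert 0 D))).card : ℝ)
          ≤ ((PS.filter (fun D => e.1 ∈ D ∧ e.2 ∈ D)).card : ℝ) := by
            exact_mod_cast Finset.card_le_card hsub2
        _ ≤ ((ν:ℝ) - 1) * (H:ℝ)^(ν-2) := count_two ν H hν e.1 e.2 (by omega)
    calc ∑ e ∈ P.filter (fun e => ¬ e.1 = 0), GF T H B ((e.2 - e.1).toNat) *
          ((PS.filter (fun D => e ∈ pairsOf (insert 0 D))).card : ℝ)
        ≤ ∑ e ∈ P.filter (fun e => ¬ e.1 = 0),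
            GF T H B ((e.2 - e.1).toNat) * (((ν:ℝ) - 1) * (H:ℝ)^(ν-2)) :=
          Finset.sum_le_sum hterm
      _ = ((ν:ℝ) - 1) * (H:ℝ)^(ν-2) *
            ∑ e ∈ P.filter (fun e => ¬ e.1 = 0), GF T H B ((e.2 - e.1).toNat) := by
          rw [Finset.mul_sum]
          exact Finset.sum_congr rfl (fun e _ => by ring)
      _ ≤ ((ν:ℝ) - 1) * (H:ℝ)^(ν-2) * ((H:ℝ) * SG) := by
          apply mul_le_mul_of_nonneg_left
          · have hstep : ∑ e ∈ P.filter (fun e => ¬ e.1 = 0), GF T H B ((e.2 - e.1).toNat)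
                ≤ ∑ x ∈ (Finset.Icc (1:ℤ) (H:ℤ)) ×ˢ (Finset.Icc 1 H), GF T H B x.2 := by
              apply sum_le_sum_reindex_real (fun e => (e.1, (e.2 - e.1).toNat))
              · intro e he
                rw [Finset.mem_filter] at he
                obtain ⟨heP, hne⟩ := he
                rw [hPdef, Finset.mem_filter, Finset.mem_product, Finset.mem_Icc,
                  Finset.mem_Icc] at heP
                rw [Finset.mem_product, Finset.mem_Icc, Finset.mem_Icc]
                refine ⟨⟨by omega, by omega⟩, by omega, by omega⟩
              · intro e he e' he' hee
                rw [Finset.mem_filter] at he he'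
                obtain ⟨heP, hne⟩ := he
                obtain ⟨heP', hne'⟩ := he'
                rw [hPdef, Finset.mem_filter, Finset.mem_product, Finset.mem_Icc,
                  Finset.mem_Icc] at heP heP'
                simp only [Prod.mk.injEq] at hee
                obtain ⟨h1, h2⟩ := hee
                exact Prod.ext h1 (by omega)
              · intro e _; rfl
              · intro x _; exact GF_nonneg T H B x.2
            calc ∑ e ∈ P.filter (fun e => ¬ e.1 = 0), GF T H B ((e.2 - e.1).toNat) ≤ _ := hstep
              _ = (H:ℝ) * SG := by
                  rw [Finset.sum_product]
                  have e1 : ∀ x : ℤ, ∑ y ∈ Finset.Icc 1 H, GF T H B ((x, y)).2 = SG := by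
                    intro x; rw [hSG]
                  rw [Finset.sum_congr rfl (fun x _ => e1 x), Finset.sum_const, card_Icc_int,
                    nsmul_eq_mul]
          · have h1 : (1:ℝ) ≤ (ν:ℝ) := by exact_mod_cast hν
            have h2 : (0:ℝ) ≤ (ν:ℝ) - 1 := by linarith
            apply mul_nonneg h2 (by positivity)
  have hfin : (H:ℝ)^(ν-1) * SG + ((ν:ℝ) - 1) * (H:ℝ)^(ν-2) * ((H:ℝ) * SG)
      ≤ (ν:ℝ) * (H:ℝ)^(ν-1) * SG := by
    rcases eq_or_lt_of_le hν with h1 | h2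
    · rw [← h1]
      norm_num
    · have he : (H:ℝ)^(ν-2) * (H:ℝ) = (H:ℝ)^(ν-1) := by
        rw [← pow_succ]
        congr 1
        omega
      apply le_of_eq
      have e2 : ((ν:ℝ) - 1) * (H:ℝ)^(ν-2) * ((H:ℝ) * SG)
          = ((ν:ℝ) - 1) * ((H:ℝ)^(ν-2) * (H:ℝ)) * SG := by ring
      rw [e2, he]
      ring
  linarith

theorem sum_singSeries_pow_le (ν r : ℕ) (hν : 1 ≤ ν) (hr : 1 ≤ r) :
    ∃ c : ℝ, 0 < c ∧ ∃ H₀ : ℕ, ∀ H : ℕ, H₀ ≤ H →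
      ∑ D ∈ (Finset.Icc (1 : ℤ) (H : ℤ)).powersetCard ν,
          (singSeries (insert 0 D)) ^ r ≤ c * (H : ℝ) ^ ν := by
  classical
  set k := ν + 1 with hkdef
  set N := k^3 * r with hNdef
  set B := 4 * N with hBdef
  set T := B * B with hTdef
  refine ⟨2^(k*T*r) * ((ν:ℝ) * zconst) + 1, ?_, 1, ?_⟩
  · have h1 : (0:ℝ) < 2^(k*T*r) := by positivity
    have h3 : (0:ℝ) ≤ (ν:ℝ) * zconst := mul_nonneg (by positivity) zconst_nonneg
    have h4 : (0:ℝ) ≤ 2^(k*T*r) * ((ν:ℝ) * zconst) := mul_nonneg h1.le h3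
    linarith
  · intro H _
    have hstep1 : ∑ D ∈ (Finset.Icc (1 : ℤ) (H : ℤ)).powersetCard ν, (singSeries (insert 0 D)) ^ r
        ≤ ∑ D ∈ (Finset.Icc (1 : ℤ) (H : ℤ)).powersetCard ν,
            2^(k*T*r) * ∑ e ∈ pairsOf (insert 0 D), GF T H B ((e.2 - e.1).toNat) := by
      apply Finset.sum_le_sum
      intro D hD
      rw [Finset.mem_powersetCard] at hD
      have h0D : (0:ℤ) ∉ D := by
        intro h
        have := hD.1 h
        rw [Finset.mem_Icc] at this
        omega
      have hcard : (insert (0:ℤ) D).card = k := by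
        rw [Finset.card_insert_of_notMem h0D, hD.2]
      have hNle : (k-1)*r*(k*k) ≤ N := by
        calc (k-1)*r*(k*k) ≤ k*r*(k*k) :=
              Nat.mul_le_mul_right _ (Nat.mul_le_mul_right r (Nat.sub_le k 1))
          _ = k^3 * r := by ring
      have hsub : insert (0:ℤ) D ⊆ Finset.Icc 0 (H:ℤ) := by
        intro x hx
        rcases Finset.mem_insert.1 hx with rfl | hx'
        · rw [Finset.mem_Icc]; constructor <;> [rfl; positivity]
        · have := hD.1 hx'
          rw [Finset.mem_Icc] at this ⊢
          omega
      exact main1 (insert 0 D) k r N B T H hcard (by omega)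
        (by have : 1 ≤ k^3 := Nat.one_le_pow _ _ (by omega); exact Nat.le_trans hr
              (by calc r = 1 * r := (one_mul r).symm
                    _ ≤ k^3 * r := Nat.mul_le_mul_right r this))
        hNle rfl rfl hsub
    have hstep2 : ∑ D ∈ (Finset.Icc (1 : ℤ) (H : ℤ)).powersetCard ν,
          2^(k*T*r) * ∑ e ∈ pairsOf (insert 0 D), GF T H B ((e.2 - e.1).toNat)
        ≤ 2^(k*T*r) * ((ν:ℝ) * (H:ℝ)^(ν-1) * (zconst * H)) := by
      rw [← Finset.mul_sum]
      apply mul_le_mul_of_nonneg_left _ (by positivity)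
      calc ∑ D ∈ (Finset.Icc (1 : ℤ) (H : ℤ)).powersetCard ν,
            ∑ e ∈ pairsOf (insert 0 D), GF T H B ((e.2 - e.1).toNat)
          ≤ (ν:ℝ) * (H:ℝ)^(ν-1) * ∑ d ∈ Finset.Icc 1 H, GF T H B d := main2 ν T B H hν
        _ ≤ (ν:ℝ) * (H:ℝ)^(ν-1) * (zconst * H) := by
            apply mul_le_mul_of_nonneg_left (main3 T H B rfl)
            have h2 : (1:ℝ) ≤ (ν:ℝ) := by exact_mod_cast hν
            positivity
    have heq : 2^(k*T*r) * ((ν:ℝ) * (H:ℝ)^(ν-1) * (zconst * H))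
        = (2^(k*T*r) * ((ν:ℝ) * zconst)) * ((H:ℝ)^(ν-1) * (H:ℝ)) := by ring
    have hpow : (H:ℝ)^(ν-1) * (H:ℝ) = (H:ℝ)^ν := by
      rw [← pow_succ]
      congr 1
      omega
    have hfinal : ∑ D ∈ (Finset.Icc (1 : ℤ) (H : ℤ)).powersetCard ν, (singSeries (insert 0 D)) ^ r
        ≤ (2^(k*T*r) * ((ν:ℝ) * zconst)) * (H:ℝ)^ν := by
      rw [← hpow, ← heq]
      linarith
    have hHν : (0:ℝ) ≤ (H:ℝ)^ν := by positivity
    nlinarith
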